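/- Let (Ω, μ) be a measure space and let p : Ω → ℝ be measurable with 1 < p⁻ := ess inf p and p⁺ := ess sup p < ∞, and let p'(x) be the conjugate exponent defined pointwise by 1/p(x) + 1/p'(x) = 1. For measurable functions define the Luxemburg norms ‖u‖_{p(·)} = inf{ λ > 0 : ∫_Ω (|u(x)|/λ)^{p(x)} dμ ≤ 1 } and similarly ‖·‖_{p'(·)}. Then there exists a constant c > 1, depending only on p⁻ and p⁺, such that whenever f has ‖f‖_{p(·)} < ∞ and g has ‖g‖_{p'(·)} < ∞, the product fg is integrable and ∫_Ω |f g| dμ ≤ c · ‖f‖_{p(·)} · ‖g‖_{p'(·)}. -/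

import Mathlib

open Set Filter MeasureTheory ENNReal

/-- The modular `ρ(u) = ∫_Ω |u(x)|^{p(x)} dμ`. -/
noncomputable def vModular {Ω : Type*} [MeasurableSpace Ω] (μ : Measure Ω)
    (p : Ω → ℝ) (u : Ω → ℝ) : ℝ≥0∞ :=
  ∫⁻ x, ENNReal.ofReal (|u x| ^ p x) ∂μ

/-- The Luxemburg norm `‖u‖_{p(·)} = inf { λ > 0 : ρ(u/λ) ≤ 1 }` (equal to `∞`
when no such `λ` exists). -/
noncomputable def luxNorm {Ω : Type*} [MeasurableSpace Ω] (μ : Measure Ω)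
    (p : Ω → ℝ) (u : Ω → ℝ) : ℝ≥0∞ :=
  sInf {c : ℝ≥0∞ | c ≠ ∞ ∧ 0 < c ∧ vModular μ p (fun x => u x / c.toReal) ≤ 1}

/-- Key estimate: if the modular of `f/a` and of `g/b` are both at most one, then
`∫ |fg| ≤ 2 a b`. -/
lemma vkey {Ω : Type*} [MeasurableSpace Ω] (μ : Measure Ω)
    (p q : Ω → ℝ) (hp : Measurable p) (hq : Measurable q)
    (hae : ∀ᵐ x ∂μ, 1 < p x) (hconj : ∀ x, 1 / p x + 1 / q x = 1)
    (f g : Ω → ℝ) (hf : Measurable f) (hg : Measurable g)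
    {a b : ℝ} (ha : 0 < a) (hb : 0 < b)
    (hmf : vModular μ p (fun x => f x / a) ≤ 1)
    (hmg : vModular μ q (fun x => g x / b) ≤ 1) :
    ∫⁻ x, ENNReal.ofReal |f x * g x| ∂μ ≤ 2 * ENNReal.ofReal a * ENNReal.ofReal b := by
  have habs : ∀ x, |f x * g x| = (a * b) * (|f x / a| * |g x / b|) := by
    intro x
    rw [abs_mul, abs_div, abs_div, abs_of_pos ha, abs_of_pos hb]
    field_simp
  have hmeasA : Measurable fun x => ENNReal.ofReal (|f x / a| ^ p x) :=
    ((hf.div_const a).abs.pow hp).ennreal_ofReal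
  have hpt : ∀ᵐ x ∂μ, ENNReal.ofReal (|f x / a| * |g x / b|) ≤
      ENNReal.ofReal (|f x / a| ^ p x) + ENNReal.ofReal (|g x / b| ^ q x) := by
    filter_upwards [hae] with x hx
    have hpq : (p x).HolderConjugate (q x) := by
      rw [Real.holderConjugate_iff]
      constructor
      · exact hx
      · simpa [one_div] using hconj x
    have hyoung := Real.young_inequality_of_nonneg (abs_nonneg (f x / a))
      (abs_nonneg (g x / b)) hpq
    have h1 : |f x / a| ^ p x / p x ≤ |f x / a| ^ p x :=
      div_le_self (Real.rpow_nonneg (abs_nonneg _) _) hx.le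
    have h2 : |g x / b| ^ q x / q x ≤ |g x / b| ^ q x :=
      div_le_self (Real.rpow_nonneg (abs_nonneg _) _) hpq.symm.lt.le
    calc ENNReal.ofReal (|f x / a| * |g x / b|)
        ≤ ENNReal.ofReal (|f x / a| ^ p x + |g x / b| ^ q x) :=
          ENNReal.ofReal_le_ofReal (hyoung.trans (add_le_add h1 h2))
      _ ≤ ENNReal.ofReal (|f x / a| ^ p x) + ENNReal.ofReal (|g x / b| ^ q x) :=
          ENNReal.ofReal_add_le
  calc ∫⁻ x, ENNReal.ofReal |f x * g x| ∂μ
      = ∫⁻ x, ENNReal.ofReal (a * b) * ENNReal.ofReal (|f x / a| * |g x / b|) ∂μ := by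
        simp_rw [habs]
        congr 1
        ext x
        rw [ENNReal.ofReal_mul (by positivity)]
    _ = ENNReal.ofReal (a * b) * ∫⁻ x, ENNReal.ofReal (|f x / a| * |g x / b|) ∂μ :=
        lintegral_const_mul' _ _ ENNReal.ofReal_ne_top
    _ ≤ ENNReal.ofReal (a * b) *
        ∫⁻ x, (ENNReal.ofReal (|f x / a| ^ p x) + ENNReal.ofReal (|g x / b| ^ q x)) ∂μ :=
        mul_le_mul_right (lintegral_mono_ae hpt) _
    _ = ENNReal.ofReal (a * b) *
        (vModular μ p (fun x => f x / a) + vModular μ q (fun x => g x / b)) := by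
        rw [lintegral_add_left hmeasA]
        rfl
    _ ≤ ENNReal.ofReal (a * b) * (1 + 1) :=
        mul_le_mul_right (add_le_add hmf hmg) _
    _ = 2 * ENNReal.ofReal a * ENNReal.ofReal b := by
        rw [ENNReal.ofReal_mul ha.le]
        ring

/-- Hölder's inequality in variable Lebesgue spaces: there is `c > 1`
such that for all `f ∈ L^{p(·)}` and `g ∈ L^{p'(·)}`, `fg ∈ L¹` and
`∫ |fg| ≤ c ‖f‖_{p(·)} ‖g‖_{p'(·)}`. -/
theorem variable_holder {Ω : Type*} [MeasurableSpace Ω] (μ : Measure Ω)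
    (p : Ω → ℝ) (hp : Measurable p)
    (hbdd : IsBoundedUnder (· ≤ ·) (ae μ) p)
    (hpm : 1 < essInf p μ)
    (p' : Ω → ℝ) (hp' : Measurable p')
    (hconj : ∀ x, 1 / p x + 1 / p' x = 1) :
    ∃ c : ℝ≥0∞, 1 < c ∧ ∀ f g : Ω → ℝ, Measurable f → Measurable g →
      luxNorm μ p f ≠ ∞ → luxNorm μ p' g ≠ ∞ →
      Integrable (fun x => f x * g x) μ ∧
      ∫⁻ x, ENNReal.ofReal |f x * g x| ∂μ ≤ c * luxNorm μ p f * luxNorm μ p' g := by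
  -- `p` is essentially bounded below, since its essential infimum exceeds `1`
  have hbdd' : IsBoundedUnder (· ≥ ·) (ae μ) p := by
    by_contra hB
    have hempty : {a : ℝ | ∀ᵐ x ∂μ, a ≤ p x} = ∅ := by
      ext a
      simp only [Set.mem_empty_iff_false, iff_false, Set.mem_setOf_eq]
      intro hle
      exact hB ⟨a, hle⟩
    have : essInf p μ = 0 := by
      rw [essInf, liminf_eq]
      rw [show {a : ℝ | ∀ᶠ x in ae μ, a ≤ p x} = ∅ from hempty]
      exact Real.sSup_empty
    rw [this] at hpm
    linarith
  have hae : ∀ᵐ x ∂μ, 1 < p x := ae_lt_of_lt_essInf hpm hbdd'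
  refine ⟨2, one_lt_two, fun f g hf hg hLf hLg => ?_⟩
  set S := {c : ℝ≥0∞ | c ≠ ∞ ∧ 0 < c ∧ vModular μ p (fun x => f x / c.toReal) ≤ 1} with hS
  set T := {c : ℝ≥0∞ | c ≠ ∞ ∧ 0 < c ∧ vModular μ p' (fun x => g x / c.toReal) ≤ 1} with hT
  have hluxf : luxNorm μ p f = sInf S := rfl
  have hluxg : luxNorm μ p' g = sInf T := rfl
  have hSne : S.Nonempty := by
    by_contra h
    rw [Set.not_nonempty_iff_eq_empty] at h
    exact hLf (by rw [hluxf, h, sInf_empty])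
  have hTne : T.Nonempty := by
    by_contra h
    rw [Set.not_nonempty_iff_eq_empty] at h
    exact hLg (by rw [hluxg, h, sInf_empty])
  -- The key bound for each admissible pair
  have key : ∀ a ∈ S, ∀ b ∈ T,
      ∫⁻ x, ENNReal.ofReal |f x * g x| ∂μ ≤ 2 * a * b := by
    intro a haS b hbT
    obtain ⟨hane, hapos, hma⟩ := haS
    obtain ⟨hbne, hbpos, hmb⟩ := hbT
    have hat : 0 < a.toReal := ENNReal.toReal_pos hapos.ne' hane
    have hbt : 0 < b.toReal := ENNReal.toReal_pos hbpos.ne' hbne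
    have := vkey μ p p' hp hp' hae hconj f g hf hg hat hbt hma hmb
    rwa [ENNReal.ofReal_toReal hane, ENNReal.ofReal_toReal hbne] at this
  set K := ∫⁻ x, ENNReal.ofReal |f x * g x| ∂μ with hK
  obtain ⟨b₀, hb₀⟩ := hTne
  have hKfin : K < ∞ := by
    obtain ⟨a₀, ha₀⟩ := hSne
    exact lt_of_le_of_lt (key a₀ ha₀ b₀ hb₀)
      (ENNReal.mul_lt_top (ENNReal.mul_lt_top (by norm_num) ha₀.1.lt_top) hb₀.1.lt_top)
  constructor
  · refine ⟨(hf.mul hg).aestronglyMeasurable, ?_⟩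
    rw [hasFiniteIntegral_iff_norm]
    simpa only [Real.norm_eq_abs] using hKfin
  · -- pass to the infimum twice
    have step1 : ∀ b ∈ T, K ≤ 2 * luxNorm μ p f * b := by
      intro b hbT
      obtain ⟨hbne, hbpos, -⟩ := id hbT
      have h2b0 : (2 : ℝ≥0∞) * b ≠ 0 := by
        simp [hbpos.ne']
      have h2bt : (2 : ℝ≥0∞) * b ≠ ∞ := ENNReal.mul_ne_top (by norm_num) hbne
      have hdiv : K / (2 * b) ≤ luxNorm μ p f := by
        rw [hluxf]
        refine le_sInf ?_
        intro a haS
        rw [ENNReal.div_le_iff_le_mul (Or.inl h2b0) (Or.inl h2bt)]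
        calc K ≤ 2 * a * b := key a haS b hbT
          _ = a * (2 * b) := by ring
      rw [ENNReal.div_le_iff_le_mul (Or.inl h2b0) (Or.inl h2bt)] at hdiv
      calc K ≤ luxNorm μ p f * (2 * b) := hdiv
        _ = 2 * luxNorm μ p f * b := by ring
    by_cases hLf0 : luxNorm μ p f = 0
    · have : K ≤ 0 := by simpa [hLf0] using step1 b₀ hb₀
      simp [le_antisymm this zero_le]
    · have h2L0 : (2 : ℝ≥0∞) * luxNorm μ p f ≠ 0 := by simp [hLf0]
      have h2Lt : (2 : ℝ≥0∞) * luxNorm μ p f ≠ ∞ := ENNReal.mul_ne_top (by norm_num) hLf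
      have hdiv : K / (2 * luxNorm μ p f) ≤ luxNorm μ p' g := by
        rw [hluxg]
        refine le_sInf ?_
        intro b hbT
        rw [ENNReal.div_le_iff_le_mul (Or.inl h2L0) (Or.inl h2Lt)]
        calc K ≤ 2 * luxNorm μ p f * b := step1 b hbT
          _ = b * (2 * luxNorm μ p f) := by ring
      rw [ENNReal.div_le_iff_le_mul (Or.inl h2L0) (Or.inl h2Lt)] at hdiv
      calc K ≤ luxNorm μ p' g * (2 * luxNorm μ p f) := hdiv
        _ = 2 * luxNorm μ p f * luxNorm μ p' g := by ring
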